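/- Marginal consistency plus phenomenological stalling implies internal stalling (Theorem 'mtctc'): Under the phenomenological setup with marginal consistency, if all phenomenological effective affinities vanish (∀ μ, Q μ = 0), then every marginal edge current vanishes at the stalling state, W i j * p j = W j i * p i for every (i,j) ∈ E, and the stalling state is a steady state of the full dynamics: W *ᵥ p = 0. -/

import Mathlib

open Matrix

/-- Marginal consistency plus phenomenological stalling implies internal stalling
(Theorem "mtctc"). -/
theorem phenomenological_stalling_implies_internal {n m : ℕ}
    (W Whid : Matrix (Fin n) (Fin n) ℝ)
    (hW1 : ∀ i j, i ≠ j → 0 ≤ W i j)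
    (hW2 : ∀ j, ∑ i, W i j = 0)
    (E : Finset (Fin n × Fin n))
    (hEsymm : ∀ i j, (i, j) ∈ E → (j, i) ∈ E)
    (hEne : ∀ i j, (i, j) ∈ E → i ≠ j)
    (hEpos : ∀ i j, (i, j) ∈ E → 0 < W i j)
    (hH1 : ∀ i j, (i, j) ∈ E → Whid i j = 0)
    (hH2 : ∀ i, Whid i i = W i i + ∑ j ∈ Finset.univ.filter (fun j => (j, i) ∈ E), W j i)
    (hH3 : ∀ i j, i ≠ j → (i, j) ∉ E → Whid i j = W i j)
    (p : Fin n → ℝ) (hp1 : ∀ i, 0 < p i) (hp2 : ∑ i, p i = 1)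
    (hp3 : Whid *ᵥ p = 0)
    (φ : Fin m → Fin n → Fin n → ℝ)
    (hφ1 : ∀ μ i j, φ μ i j = -φ μ j i)
    (hφ2 : ∀ μ i j, (i, j) ∉ E → φ μ i j = 0)
    (Q : Fin m → ℝ)
    (hmc : ∀ i j, (i, j) ∈ E →
      Real.log (W i j * p j / (W j i * p i)) = ∑ μ, Q μ * φ μ i j) :
    (∀ μ, Q μ = 0) →
      ((∀ i j, (i, j) ∈ E → W i j * p j = W j i * p i) ∧ W *ᵥ p = 0) := by
  intro hQ
  have hbal : ∀ i j, (i, j) ∈ E → W i j * p j = W j i * p i := by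
    intro i j hij
    have hji := hEsymm i j hij
    have hnum : 0 < W i j * p j := mul_pos (hEpos i j hij) (hp1 j)
    have hden : 0 < W j i * p i := mul_pos (hEpos j i hji) (hp1 i)
    have hlog : Real.log (W i j * p j / (W j i * p i)) = 0 := by
      rw [hmc i j hij]
      simp [hQ]
    rcases Real.log_eq_zero.mp hlog with h | h | h
    · exact absurd h (ne_of_gt (div_pos hnum hden))
    · field_simp at h
      rw [div_eq_one_iff_eq hden.ne'] at h
      linarith
    · nlinarith [div_pos hnum hden]
  refine ⟨hbal, ?_⟩
  funext i
  have h0 : ∑ j, Whid i j * p j = 0 := by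
    have := congrFun hp3 i
    simpa [Matrix.mulVec, dotProduct] using this
  have hSS : Finset.univ.filter (fun j => (j, i) ∈ E)
      = Finset.univ.filter (fun j : Fin n => (i, j) ∈ E) := by
    ext j
    simp only [Finset.mem_filter, Finset.mem_univ, true_and]
    exact ⟨hEsymm j i, hEsymm i j⟩
  have hg : ∀ j, (W i j - Whid i j) * p j
      = (if (i, j) ∈ E then W i j * p j else 0)
        - (if j = i then (∑ k ∈ Finset.univ.filter (fun k : Fin n => (i, k) ∈ E), W k i) * p i else 0) := by
    intro j
    by_cases hji : j = i
    · rw [hji]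
      have hiE : (i, i) ∉ E := fun h => hEne i i h rfl
      rw [hH2 i, hSS]
      simp [hiE]
    · by_cases hE : (i, j) ∈ E
      · rw [hH1 i j hE]
        simp [hE, hji]
      · rw [hH3 i j (fun h => hji h.symm) hE]
        simp [hE, hji]
  have hsum : ∑ j, (W i j - Whid i j) * p j = 0 := by
    rw [Finset.sum_congr rfl (fun j _ => hg j), Finset.sum_sub_distrib]
    rw [Finset.sum_ite_eq' Finset.univ i
      (fun _ => (∑ k ∈ Finset.univ.filter (fun k : Fin n => (i, k) ∈ E), W k i) * p i)]
    simp only [Finset.mem_univ, if_true]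
    rw [← Finset.sum_filter, Finset.sum_mul]
    refine sub_eq_zero.mpr (Finset.sum_congr rfl ?_)
    intro j hj
    simp only [Finset.mem_filter] at hj
    exact hbal i j hj.2
  have : ∑ j, W i j * p j = 0 := by
    have := Finset.sum_congr rfl (fun j (_ : j ∈ Finset.univ) => sub_mul (W i j) (Whid i j) (p j))
    rw [this, Finset.sum_sub_distrib, h0, sub_zero] at hsum
    exact hsum
  simpa [Matrix.mulVec, dotProduct] using this
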